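/- Let k be a positive integer and let i, j be integers. Then A^{−k}_{i,t}·A^{k}_{t,j} = 0 for every integer t outside the range i − k ≤ t ≤ i, and ∑_{t=i−k}^{i} A^{−k}_{i,t} · A^{k}_{t,j} equals 1 if i = j and 0 otherwise. (This expresses that the matrices J_k^{(α)} and J_{−k}^{(α)} are mutually inverse.) -/

import Mathlib

variable {R : Type*} [CommRing R]

/-- Elementary symmetric polynomial `e_m` of the entries of a list (zero for `m < 0`). -/
def esymL (l : List R) (m : ℤ) : R :=
  if 0 ≤ m then
    ∑ s ∈ Finset.powersetCard m.toNat (Finset.univ : Finset (Fin l.length)), ∏ i ∈ s, l.get i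
  else 0

/-- Complete homogeneous symmetric polynomial `h_m` of the entries of a list (zero for `m < 0`). -/
def hsymL (l : List R) (m : ℤ) : R :=
  if 0 ≤ m then
    ∑ s ∈ (Finset.univ : Finset (Fin l.length)).sym m.toNat, ((s.1).map l.get).prod
  else 0

/-- The list `f a, f (a+1), …, f b` (empty if `b < a`). -/
def intList (f : ℤ → R) (a b : ℤ) : List R :=
  (List.range (b + 1 - a).toNat).map (fun p => f (a + (p : ℤ)))

/-- `e_m(f a, …, f b)`. -/
def eI (f : ℤ → R) (a b m : ℤ) : R := esymL (intList f a b) m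

/-- `h_m(f a, …, f b)`. -/
def hI (f : ℤ → R) (a b m : ℤ) : R := hsymL (intList f a b) m

/-- The matrix entries `A^k_{ij}` of the deformed current operator `J_k^{(α)}`:
`A^k_{ij} = e_{j−i−k}(−α_{i+1},…,−α_{j−1})` if `k > 0` and `j ≥ i + k`;
`A^k_{ij} = h_{j−i−k}(α_j,…,α_i)` if `k ≤ 0` and `j ≤ i ≤ j − k`; `0` otherwise. -/
def Amat (α : ℤ → R) (k i j : ℤ) : R :=
  if 0 < k ∧ i + k ≤ j then eI (fun t => -α t) (i + 1) (j - 1) (j - i - k)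
  else if k ≤ 0 ∧ j ≤ i ∧ i ≤ j - k then hI α j i (j - i - k)
  else 0


namespace AmatAux

def eN : List R → ℕ → R
  | _, 0 => 1
  | [], _ + 1 => 0
  | x :: l, n + 1 => eN l (n + 1) + x * eN l n

def hN : List R → ℕ → R
  | _, 0 => 1
  | [], _ + 1 => 0
  | x :: l, n + 1 => hN l (n + 1) + x * hN (x :: l) n
  termination_by l n => (l.length, n)

@[simp] lemma eN_zero (l : List R) : eN l 0 = 1 := by cases l <;> rfl
@[simp] lemma hN_zero (l : List R) : hN l 0 = 1 := by cases l <;> simp [hN]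
@[simp] lemma eN_nil_succ (n : ℕ) : eN ([] : List R) (n+1) = 0 := rfl
@[simp] lemma hN_nil_succ (n : ℕ) : hN ([] : List R) (n+1) = 0 := by simp [hN]
lemma eN_cons (x : R) (l : List R) (n : ℕ) :
    eN (x :: l) (n+1) = eN l (n+1) + x * eN l n := rfl
lemma hN_cons (x : R) (l : List R) (n : ℕ) :
    hN (x :: l) (n+1) = hN l (n+1) + x * hN (x :: l) n := by rw [hN]

lemma eN_eq_zero (l : List R) (n : ℕ) (h : l.length < n) : eN l n = 0 := by
  induction l generalizing n with
  | nil => cases n with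
    | zero => omega
    | succ n => rfl
  | cons x l ih =>
    cases n with
    | zero => simp at h
    | succ n =>
      have h' : l.length < n := by simp at h; omega
      rw [eN_cons, ih _ (by omega), ih _ h']
      ring

lemma esymm_coe (l : List R) (n : ℕ) : Multiset.esymm (↑l) n = eN l n := by
  induction l generalizing n with
  | nil =>
    cases n with
    | zero => simp [Multiset.esymm]
    | succ n => simp [Multiset.esymm, Multiset.powersetCard_zero_right]
  | cons x l ih =>
    cases n with
    | zero => simp [Multiset.esymm]
    | succ n =>
      rw [eN_cons, ← ih, ← ih, ← Multiset.cons_coe, Multiset.esymm,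
        Multiset.powersetCard_cons, Multiset.map_add, Multiset.sum_add,
        Multiset.map_map]
      congr 1
      rw [Multiset.esymm, ← Multiset.sum_map_mul_left]
      congr 1
      apply Multiset.map_congr rfl
      intro t _
      simp [Multiset.prod_cons]

lemma esymL_eq (l : List R) (n : ℕ) : esymL l (n : ℤ) = eN l n := by
  rw [esymL, if_pos (by positivity), Int.toNat_natCast]
  have h := Finset.esymm_map_val l.get (Finset.univ : Finset (Fin l.length)) n
  rw [Fin.univ_val_map, List.ofFn_get, esymm_coe] at h
  rw [← h]



def HS {ι : Type*} [Fintype ι] [DecidableEq ι] (g : ι → R) (n : ℕ) : R :=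
  ∑ s : Sym ι n, ((s : Multiset ι).map g).prod

lemma HS_zero {ι : Type*} [Fintype ι] [DecidableEq ι] (g : ι → R) : HS g 0 = 1 := by
  rw [HS, Fintype.sum_unique]
  simp [Sym.eq_nil_of_card_zero]

lemma HS_isEmpty {ι : Type*} [Fintype ι] [DecidableEq ι] [IsEmpty ι] (g : ι → R) (n : ℕ) :
    HS g (n+1) = 0 := by
  haveI : IsEmpty (Sym ι (n+1)) := by
    refine ⟨fun s => ?_⟩
    obtain ⟨a, ha⟩ := Multiset.card_pos_iff_exists_mem.mp
      (by rw [s.2]; exact Nat.succ_pos n)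
    exact IsEmpty.false a
  rw [HS, Finset.univ_eq_empty, Finset.sum_empty]

lemma HS_equiv {ι κ : Type*} [Fintype ι] [DecidableEq ι] [Fintype κ] [DecidableEq κ] (e : ι ≃ κ) (g : κ → R) (n : ℕ) :
    HS (g ∘ e) n = HS g n := by
  rw [HS, HS]
  refine Fintype.sum_equiv (Sym.equivCongr e) _ _ fun s => ?_
  rw [Sym.equivCongr_apply, Sym.coe_map, Multiset.map_map]

lemma HS_option {ι : Type*} [Fintype ι] [DecidableEq ι] (g : Option ι → R) (n : ℕ) :
    HS g (n+1) = HS (g ∘ some) (n+1) + g none * HS g n := by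
  rw [HS, ← Equiv.sum_comp (symOptionSuccEquiv (α := ι)).symm
      (fun s : Sym (Option ι) (n+1) => ((s : Multiset (Option ι)).map g).prod),
    Fintype.sum_sum_type, add_comm]
  congr 1
  · rw [HS]
    refine Finset.sum_congr rfl fun s _ => ?_
    show ((((s.map (Function.Embedding.some : ι ↪ Option ι) : Sym (Option ι) (n+1))) :
        Multiset (Option ι)).map g).prod = _
    rw [Sym.coe_map, Multiset.map_map]
    rfl
  · rw [HS, Finset.mul_sum]
    refine Finset.sum_congr rfl fun s _ => ?_
    show ((((none ::ₛ s) : Sym (Option ι) (n+1)) : Multiset (Option ι)).map g).prod = _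
    rw [Sym.coe_cons, Multiset.map_cons, Multiset.prod_cons]

lemma HS_get (l : List R) (n : ℕ) : HS l.get n = hN l n := by
  induction l generalizing n with
  | nil =>
    cases n with
    | zero => rw [HS_zero, hN_zero]
    | succ n =>
      haveI : IsEmpty (Fin ([] : List R).length) := by simp; infer_instance
      rw [HS_isEmpty, hN_nil_succ]
  | cons x l ih =>
    induction n with
    | zero => rw [HS_zero, hN_zero]
    | succ n ihn =>
      have hg : (x :: l).get = (Option.elim' x l.get) ∘ (finSuccEquiv l.length) := by
        funext p
        refine Fin.cases ?_ (fun p => ?_) p <;> simp [Option.elim']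
      rw [hg]; erw [HS_equiv]; rw [HS_option, hN_cons, ← ih, ← ihn, hg]; erw [HS_equiv]
      congr 1

lemma hsymL_eq (l : List R) (n : ℕ) : hsymL l (n : ℤ) = hN l n := by
  rw [hsymL, if_pos (by positivity), Int.toNat_natCast, Finset.sym_univ, ← HS_get, HS]
  rfl

lemma intList_eq (f : ℤ → R) (a b : ℤ) :
    intList f a b = (List.range (b + 1 - a).toNat).map (fun p : ℕ => f (a + Int.ofNat p)) := by
  rw [intList]
  show List.map _ ((List.range (b + 1 - a).toNat).flatMap fun a => [Int.ofNat a]) = _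
  have : ∀ (l : List ℕ), (l.flatMap fun a => [Int.ofNat a]) = l.map Int.ofNat := by
    intro l; induction l with
    | nil => rfl
    | cons x l ih => simp only [List.flatMap_cons, ih, List.map_cons, List.singleton_append]
  rw [this, List.map_map]
  rfl

lemma intList_nil (f : ℤ → R) (a b : ℤ) (h : b < a) : intList f a b = [] := by
  rw [intList_eq, Int.toNat_of_nonpos (by omega), List.range_zero, List.map_nil]

lemma intList_cons (f : ℤ → R) (a b : ℤ) (h : a ≤ b) :
    intList f a b = f a :: intList f (a+1) b := by
  rw [intList_eq, intList_eq]
  rw [show (b + 1 - a).toNat = (b + 1 - (a+1)).toNat + 1 by omega,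
    List.range_succ_eq_map, List.map_cons, List.map_map]
  refine congrArg₂ _ (by norm_num) ?_
  refine List.map_congr_left fun p _ => ?_
  simp only [Function.comp_apply, Int.ofNat_eq_natCast]
  push_cast
  ring_nf

lemma intList_length (f : ℤ → R) (a b : ℤ) :
    (intList f a b).length = (b + 1 - a).toNat := by
  rw [intList_eq]
  simp

lemma eI_of_nonneg (f : ℤ → R) (a b m : ℤ) (h : 0 ≤ m) :
    eI f a b m = eN (intList f a b) m.toNat := by
  rw [eI, ← Int.toNat_of_nonneg h, esymL_eq, Int.toNat_natCast]

lemma hI_of_nonneg (f : ℤ → R) (a b m : ℤ) (h : 0 ≤ m) :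
    hI f a b m = hN (intList f a b) m.toNat := by
  rw [hI, ← Int.toNat_of_nonneg h, hsymL_eq, Int.toNat_natCast]

lemma eI_neg (f : ℤ → R) (a b m : ℤ) (h : m < 0) : eI f a b m = 0 := by
  rw [eI, esymL, if_neg (by omega)]

lemma hI_neg (f : ℤ → R) (a b m : ℤ) (h : m < 0) : hI f a b m = 0 := by
  rw [hI, hsymL, if_neg (by omega)]

lemma eI_zero (f : ℤ → R) (a b : ℤ) : eI f a b 0 = 1 := by
  rw [eI_of_nonneg _ _ _ _ le_rfl, Int.toNat_zero, eN_zero]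

lemma hI_zero (f : ℤ → R) (a b : ℤ) : hI f a b 0 = 1 := by
  rw [hI_of_nonneg _ _ _ _ le_rfl, Int.toNat_zero, hN_zero]

lemma eI_eq_zero_of_lt (f : ℤ → R) (a b m : ℤ) (h1 : 0 < m) (h2 : b + 1 - a < m) :
    eI f a b m = 0 := by
  rw [eI_of_nonneg _ _ _ _ (by omega), eN_eq_zero _ _ (by rw [intList_length]; omega)]

lemma hI_nil_pos (f : ℤ → R) (a b m : ℤ) (hb : b < a) (hm : 0 < m) : hI f a b m = 0 := by
  rw [hI_of_nonneg _ _ _ _ (by omega), intList_nil _ _ _ hb,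
    show m.toNat = (m - 1).toNat + 1 by omega, hN_nil_succ]

lemma eI_cons (f : ℤ → R) (a b m : ℤ) (hab : a ≤ b) :
    eI f a b m = eI f (a+1) b m + f a * eI f (a+1) b (m-1) := by
  rcases lt_trichotomy m 0 with h | h | h
  · rw [eI_neg _ _ _ _ h, eI_neg _ _ _ _ h, eI_neg _ _ _ _ (by omega)]
    ring
  · subst h
    rw [eI_zero, eI_zero, eI_neg _ _ _ _ (by omega)]
    ring
  · rw [eI_of_nonneg _ _ _ _ (by omega), eI_of_nonneg _ _ _ _ (by omega),
      eI_of_nonneg _ _ _ _ (by omega), intList_cons _ _ _ hab,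
      show m.toNat = (m-1).toNat + 1 by omega, eN_cons]

lemma hI_cons (f : ℤ → R) (a b m : ℤ) (hab : a ≤ b) :
    hI f a b m = hI f (a+1) b m + f a * hI f a b (m-1) := by
  rcases lt_trichotomy m 0 with h | h | h
  · rw [hI_neg _ _ _ _ h, hI_neg _ _ _ _ h, hI_neg _ _ _ _ (by omega)]
    ring
  · subst h
    rw [hI_zero, hI_zero, hI_neg _ _ _ _ (by omega)]
    ring
  · rw [hI_of_nonneg _ _ _ _ (by omega), hI_of_nonneg _ _ _ _ (by omega),
      hI_of_nonneg _ _ _ _ (by omega), intList_cons _ _ _ hab,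
      show m.toNat = (m-1).toNat + 1 by omega, hN_cons, ← intList_cons _ _ _ hab]

lemma telescope (f : ℤ → R) (a b : ℤ) (h : a ≤ b) :
    ∑ t ∈ Finset.Icc a b, (f t - f (t-1)) = f b - f (a-1) := by
  refine Int.le_induction (motive := fun b _ => ∑ t ∈ Finset.Icc a b, (f t - f (t-1)) = f b - f (a-1))
    (by simp) (fun b hb ih => ?_) b h
  show ∑ t ∈ Finset.Icc a (b+1), (f t - f (t-1)) = f (b+1) - f (a-1)
  rw [show Finset.Icc a (b+1) = insert (b+1) (Finset.Icc a b) from by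
      ext u; simp only [Finset.mem_insert, Finset.mem_Icc]; omega,
    Finset.sum_insert (by simp only [Finset.mem_Icc]; omega), ih]
  ring

lemma key (α : ℤ → R) (i j : ℤ) (hij : i < j) (K : ℕ) :
    ∑ t ∈ Finset.Icc (i - (K : ℤ)) i,
      hI α t i (t - i + K) * eI (fun s => -α s) (t+1) (j-1) (j - t - K) = 0 := by
  induction K with
  | zero =>
    simp only [Nat.cast_zero, sub_zero, add_zero]
    rw [Finset.Icc_self, Finset.sum_singleton, sub_self, hI_zero, one_mul,
      eI_eq_zero_of_lt _ _ _ _ (by omega) (by omega)]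
  | succ K ih =>
    set g : ℤ → R := fun s => -α s with hg
    push_cast
    set F : ℤ → R := fun t => hI α (t+1) i (t - i + K + 1) * eI g (t+1) (j-1) (j - t - K - 1)
      with hF
    have hterm : ∀ t ∈ Finset.Icc (i - ((K:ℤ)+1)) i,
        hI α t i (t - i + (K+1)) * eI g (t+1) (j-1) (j - t - (K+1))
          = (F t - F (t-1)) + hI α t i (t - i + K) * eI g (t+1) (j-1) (j - t - K) := by
      intro t ht
      simp only [Finset.mem_Icc] at ht
      have h1 : hI α t i (t - i + ((K:ℤ)+1)) = hI α (t+1) i (t - i + ((K:ℤ)+1))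
          + α t * hI α t i (t - i + ((K:ℤ)+1) - 1) := hI_cons α t i _ (by omega)
      have h2 : eI g t (j-1) (j - t - K) = eI g (t+1) (j-1) (j - t - K)
          + g t * eI g (t+1) (j-1) (j - t - K - 1) := eI_cons g t (j-1) _ (by omega)
      have h3 : F (t-1) = hI α t i (t - i + K) * eI g t (j-1) (j - t - K) := by
        show hI α (t-1+1) i (t-1 - i + K + 1) * eI g (t-1+1) (j-1) (j - (t-1) - K - 1) = _
        rw [show t - 1 + 1 = t by ring, show t - 1 - i + (K:ℤ) + 1 = t - i + K by ring,
          show j - (t-1) - (K:ℤ) - 1 = j - t - K by ring]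
      have h4 : F t = hI α (t+1) i (t - i + K + 1) * eI g (t+1) (j-1) (j - t - K - 1) := rfl
      have hgt : g t = -α t := rfl
      rw [show t - i + ((K:ℤ)+1) = t - i + K + 1 by ring] at h1 ⊢
      rw [show j - t - ((K:ℤ)+1) = j - t - K - 1 by ring]
      rw [h1, h3, h2, h4, hgt,
        show t - i + (K:ℤ) + 1 - 1 = t - i + K by ring]
      ring
    rw [Finset.sum_congr rfl hterm, Finset.sum_add_distrib,
      telescope F (i - ((K:ℤ)+1)) i (by omega)]
    have hF1 : F i = 0 := by
      show hI α (i+1) i (i - i + K + 1) * eI g (i+1) (j-1) (j - i - K - 1) = 0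
      rw [show i - i + (K:ℤ) + 1 = K + 1 by ring, hI_nil_pos _ _ _ _ (by omega) (by omega),
        zero_mul]
    have hF2 : F (i - ((K:ℤ)+1) - 1) = 0 := by
      show hI α (i - ((K:ℤ)+1) - 1 + 1) i (i - ((K:ℤ)+1) - 1 - i + K + 1) * _ = 0
      rw [show i - ((K:ℤ)+1) - 1 - i + K + 1 = -1 by ring, hI_neg _ _ _ _ (by omega), zero_mul]
    rw [hF1, hF2,
      show Finset.Icc (i - ((K:ℤ)+1)) i = insert (i - (K:ℤ) - 1) (Finset.Icc (i - (K:ℤ)) i) from by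
        ext u; simp only [Finset.mem_insert, Finset.mem_Icc]; omega,
      Finset.sum_insert (by simp only [Finset.mem_Icc]; omega),
      show i - (K:ℤ) - 1 - i + (K:ℤ) = -1 by ring, hI_neg _ _ _ _ (by omega), zero_mul, ih]
    ring

end AmatAux

open AmatAux in
/-- Lemma 3.3: for k > 0, the matrices J_k and J_{-k} are mutually inverse:
A^{−k}_{i,t} · A^{k}_{t,j} vanishes unless i − k ≤ t ≤ i, and
∑_{t=i−k}^{i} A^{−k}_{i,t} A^{k}_{t,j} = δ_{ij}. -/
theorem Amat_inverse (α : ℤ → R) (k i j : ℤ) (hk : 0 < k) :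
    (∀ t : ℤ, t ∉ Finset.Icc (i - k) i → Amat α (-k) i t * Amat α k t j = 0) ∧
      (∑ t ∈ Finset.Icc (i - k) i, Amat α (-k) i t * Amat α k t j)
        = if i = j then 1 else 0 := by
  constructor
  · intro t ht
    simp only [Finset.mem_Icc] at ht
    rw [Amat, if_neg (by omega), if_neg (by omega), zero_mul]
  · rcases lt_trichotomy j i with hji | hji | hij
    · rw [if_neg (by omega)]
      refine Finset.sum_eq_zero fun t ht => ?_
      simp only [Finset.mem_Icc] at ht
      rw [show Amat α k t j = 0 by rw [Amat, if_neg (by omega), if_neg (by omega)], mul_zero]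
    · subst hji
      rw [if_pos rfl,
        show Finset.Icc (j-k) j = insert (j-k) (Finset.Icc (j-k+1) j) from by
          ext u; simp only [Finset.mem_insert, Finset.mem_Icc]; omega,
        Finset.sum_insert (by simp only [Finset.mem_Icc]; omega)]
      have e1 : Amat α (-k) j (j-k) = 1 := by
        rw [Amat, if_neg (by omega), if_pos (by omega),
          show (j-k) - j - -k = 0 by ring, hI_zero]
      have e2 : Amat α k (j-k) j = 1 := by
        rw [Amat, if_pos (by omega), show j - (j-k) - k = 0 by ring, eI_zero]
      have e3 : ∑ t ∈ Finset.Icc (j-k+1) j, Amat α (-k) j t * Amat α k t j = 0 := by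
        refine Finset.sum_eq_zero fun t ht => ?_
        simp only [Finset.mem_Icc] at ht
        rw [show Amat α k t j = 0 by rw [Amat, if_neg (by omega), if_neg (by omega)], mul_zero]
      rw [e1, e2, e3]
      ring
    · rw [if_neg (by omega)]
      obtain ⟨K, hKk⟩ : ∃ K : ℕ, (K : ℤ) = k := ⟨k.toNat, Int.toNat_of_nonneg (by omega)⟩
      subst hKk
      rw [← key α i j hij K]
      refine Finset.sum_congr rfl fun t ht => ?_
      simp only [Finset.mem_Icc] at ht
      have a1 : Amat α (-(K:ℤ)) i t = hI α t i (t - i + K) := by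
        rw [Amat, if_neg (by omega), if_pos (by omega),
          show t - i - -(K:ℤ) = t - i + K by ring]
      have a2 : Amat α (K:ℤ) t j = eI (fun s => -α s) (t+1) (j-1) (j - t - K) := by
        by_cases hc : t + (K:ℤ) ≤ j
        · rw [Amat, if_pos ⟨by omega, hc⟩]
        · rw [Amat, if_neg (by omega), if_neg (by omega), eI_neg _ _ _ _ (by omega)]
      rw [a1, a2]
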